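/- For every real a with 0 < a < 1, the function t ↦ ∫_t^a ((x/(x² + t − t²))² − 1)^{−1/2} dx tends to 1 − √(1 − a²) as t → 0⁺. -/

import Mathlib

set_option maxHeartbeats 1000000
open Filter Set MeasureTheory intervalIntegral


noncomputable def und (t x : ℝ) : ℝ :=
  (x ^ 2 + t - t ^ 2) / Real.sqrt (x ^ 2 - (x ^ 2 + t - t ^ 2) ^ 2)

lemma und_eq (t x : ℝ) (hu : 0 < x ^ 2 + t - t ^ 2) :
    1 / Real.sqrt ((x / (x ^ 2 + t - t ^ 2)) ^ 2 - 1) = und t x := by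
  unfold und
  set u := x ^ 2 + t - t ^ 2 with hudef
  have h1 : (x / u) ^ 2 - 1 = (x ^ 2 - u ^ 2) / u ^ 2 := by field_simp
  rw [h1]
  rcases le_or_gt (x ^ 2 - u ^ 2) 0 with h | h
  · rw [Real.sqrt_eq_zero'.mpr (div_nonpos_of_nonpos_of_nonneg h (by positivity)),
      Real.sqrt_eq_zero'.mpr h]
    simp
  · rw [Real.sqrt_div h.le, Real.sqrt_sq hu.le, one_div, inv_div]

lemma und_nonneg (t x : ℝ) (h : 0 ≤ x ^ 2 + t - t ^ 2) : 0 ≤ und t x := by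
  unfold und; positivity

lemma lower_ptwise (a t x : ℝ) (ht0 : 0 < t) (htx : t < x) (hxa : x ≤ a)
    (hax : a < 1 - t) :
    x / Real.sqrt (1 - x ^ 2) ≤ und t x := by
  have hx0 : 0 < x := ht0.trans htx
  have hx1 : x < 1 := by linarith
  have ht1 : t < 1 := by linarith
  have hfact : x ^ 2 - (x ^ 2 + t - t ^ 2) ^ 2
      = (x - t) * ((x + t) * ((1 - t - x) * (1 - t + x))) := by ring
  have hP : 0 < x ^ 2 - (x ^ 2 + t - t ^ 2) ^ 2 := by
    rw [hfact]
    have h1 : 0 < x - t := by linarith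
    have h2 : 0 < x + t := by linarith
    have h3 : 0 < 1 - t - x := by linarith
    have h4 : 0 < 1 - t + x := by linarith
    positivity
  have hx2 : 0 < 1 - x ^ 2 := by nlinarith
  have hQ : 0 < x ^ 2 - x ^ 4 := by nlinarith [mul_pos (mul_pos hx0 hx0) hx2]
  have key : x / Real.sqrt (1 - x ^ 2) = x ^ 2 / Real.sqrt (x ^ 2 - x ^ 4) := by
    rw [show x ^ 2 - x ^ 4 = x ^ 2 * (1 - x ^ 2) by ring,
      Real.sqrt_mul (sq_nonneg x), Real.sqrt_sq hx0.le, pow_two,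
      mul_div_mul_left _ _ (ne_of_gt hx0)]
  rw [key]
  unfold und
  have hsP : 0 < Real.sqrt (x ^ 2 - (x ^ 2 + t - t ^ 2) ^ 2) := Real.sqrt_pos.mpr hP
  have h5 : 0 < t * (1 - t) := mul_pos ht0 (by linarith)
  gcongr
  · nlinarith [h5, sq_nonneg x]
  · nlinarith [h5]
  · nlinarith [h5, mul_nonneg h5.le (sq_nonneg x), sq_nonneg (t * (1 - t))]

lemma f0_eq (x : ℝ) (hx0 : 0 < x) :
    x / Real.sqrt (1 - x ^ 2) = x ^ 2 / Real.sqrt (x ^ 2 - x ^ 4) := by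
  rw [show x ^ 2 - x ^ 4 = x ^ 2 * (1 - x ^ 2) by ring,
    Real.sqrt_mul (sq_nonneg x), Real.sqrt_sq hx0.le, pow_two,
    mul_div_mul_left _ _ (ne_of_gt hx0)]

lemma rpow_neg_half_eq (z : ℝ) (hz : 0 ≤ z) :
    z ^ (-(2:ℝ)⁻¹) = (Real.sqrt z)⁻¹ := by
  rw [Real.rpow_neg hz]
  congr 1
  rw [Real.sqrt_eq_rpow]
  norm_num

lemma coarse_ptwise (a t x : ℝ) (ht0 : 0 < t) (hta : t ≤ (1 - a) / 2) (ha1 : a < 1)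
    (htx : t < x) (hxa : x ≤ a) :
    und t x ≤ (2 / Real.sqrt ((1 - a) / 2)) * (x - t) ^ (-(2:ℝ)⁻¹) := by
  have hx0 : 0 < x := ht0.trans htx
  have ha0 : 0 < a := hx0.trans_le hxa
  have ht1 : t < 1 := by linarith
  have hc : 0 < t - t ^ 2 := by nlinarith
  set u := x ^ 2 + t - t ^ 2 with hudef
  have hu : 0 < u := by nlinarith [sq_nonneg x]
  have hxmu : x - u = (x - t) * (1 - t - x) := by rw [hudef]; ring
  have h3 : (1 - a) / 2 ≤ 1 - t - x := by linarith
  have h3' : 0 < (1 - a) / 2 := by linarith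
  have hxmu0 : 0 < x - u := by
    rw [hxmu]; exact mul_pos (by linarith) (by linarith)
  have step1 : und t x ≤ u / Real.sqrt ((x - u) * u) := by
    unfold und
    rw [← hudef]
    apply div_le_div_of_nonneg_left hu.le (Real.sqrt_pos.mpr (by positivity))
    apply Real.sqrt_le_sqrt
    nlinarith
  have step2 : u / Real.sqrt ((x - u) * u) = Real.sqrt u / Real.sqrt (x - u) := by
    rw [Real.sqrt_mul hxmu0.le u]
    nth_rewrite 1 [← Real.mul_self_sqrt hu.le]
    rw [mul_div_mul_right _ _ (ne_of_gt (Real.sqrt_pos.mpr hu))]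
  have hsu : Real.sqrt u ≤ 2 := by
    rw [show (2:ℝ) = Real.sqrt 4 by
      rw [show (4:ℝ) = 2 ^ 2 by norm_num, Real.sqrt_sq]; norm_num]
    apply Real.sqrt_le_sqrt
    nlinarith
  have hsd : Real.sqrt ((1 - a) / 2) * Real.sqrt (x - t) ≤ Real.sqrt (x - u) := by
    rw [← Real.sqrt_mul h3'.le]
    apply Real.sqrt_le_sqrt
    rw [hxmu]
    nlinarith
  have step3 : Real.sqrt u / Real.sqrt (x - u)
      ≤ 2 / (Real.sqrt ((1 - a) / 2) * Real.sqrt (x - t)) := by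
    apply div_le_div₀ (by norm_num) hsu (mul_pos (Real.sqrt_pos.mpr h3') (Real.sqrt_pos.mpr (by linarith))) hsd
  have step4 : (2 / Real.sqrt ((1 - a) / 2)) * (x - t) ^ (-(2:ℝ)⁻¹)
      = 2 / (Real.sqrt ((1 - a) / 2) * Real.sqrt (x - t)) := by
    rw [rpow_neg_half_eq _ (by linarith : (0:ℝ) ≤ x - t), ← div_eq_mul_inv, div_div]
  rw [step4]
  calc und t x ≤ u / Real.sqrt ((x - u) * u) := step1
    _ = Real.sqrt u / Real.sqrt (x - u) := step2
    _ ≤ _ := step3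

lemma fine_ptwise (a t δ x : ℝ) (ht0 : 0 < t) (hδ0 : 0 < δ) (hδ3 : δ ^ 3 = t)
    (hta : t ≤ (1 - a) / 2) (ha1 : a < 1) (hδx : δ ≤ x) (hxa : x ≤ a) :
    und t x ≤ ((1 + δ) / Real.sqrt ((1 - δ ^ 2) * ((1 - t) * (1 - t / (1 - a)))))
      * (x / Real.sqrt (1 - x ^ 2)) := by
  have hx0 : 0 < x := hδ0.trans_le hδx
  have ha0 : 0 < a := hx0.trans_le hxa
  have h1a : 0 < 1 - a := by linarith
  have ht1 : t < 1 := by linarith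
  have hx1 : x < 1 := lt_of_le_of_lt hxa ha1
  have hδ1 : δ < 1 := by linarith [hδx.trans hxa]
  have hδ2x : δ ^ 2 ≤ x ^ 2 := by nlinarith
  have htx : t < x := by nlinarith
  set u := x ^ 2 + t - t ^ 2 with hudef
  have hc : 0 < t - t ^ 2 := by nlinarith
  have hu : 0 < u := by nlinarith [sq_nonneg x]
  -- numerator bound
  have hux : u ≤ x ^ 2 * (1 + δ) := by
    have : t ≤ δ * x ^ 2 := by nlinarith
    nlinarith
  -- m and its positivity
  have hta2 : t / (1 - a) ≤ 1 / 2 := by rw [div_le_iff₀ h1a]; linarith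
  have hm1 : 0 < 1 - δ ^ 2 := by nlinarith
  have hm2 : 0 < 1 - t := by linarith
  have hm3 : 0 < 1 - t / (1 - a) := by linarith
  have hm : 0 < (1 - δ ^ 2) * ((1 - t) * (1 - t / (1 - a))) := by positivity
  -- factor bounds
  have hA1 : x * (1 - δ ^ 2) ≤ x - t := by nlinarith
  have hA2 : (1 - x) * (1 - t / (1 - a)) ≤ 1 - t - x := by
    have h6 : 1 ≤ (1 - x) / (1 - a) := (one_le_div h1a).mpr (by linarith)
    have h7 : t ≤ t * ((1 - x) / (1 - a)) := le_mul_of_one_le_right ht0.le h6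
    have e : (1 - x) * (1 - t / (1 - a)) = (1 - x) - t * ((1 - x) / (1 - a)) := by ring
    rw [e]; linarith
  have hA3 : x ≤ x + t := by linarith
  have hA4 : (1 + x) * (1 - t) ≤ 1 - t + x := by nlinarith
  have h12 : (x * (1 - δ ^ 2)) * ((1 - x) * (1 - t / (1 - a)))
      ≤ (x - t) * (1 - t - x) :=
    mul_le_mul hA1 hA2 (mul_nonneg (by linarith) hm3.le) (by linarith)
  have h34 : x * ((1 + x) * (1 - t)) ≤ (x + t) * (1 - t + x) :=
    mul_le_mul hA3 hA4 (by positivity) (by linarith)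
  have htot : ((x * (1 - δ ^ 2)) * ((1 - x) * (1 - t / (1 - a)))) * (x * ((1 + x) * (1 - t)))
      ≤ ((x - t) * (1 - t - x)) * ((x + t) * (1 - t + x)) :=
    mul_le_mul h12 h34 (mul_nonneg hx0.le (mul_nonneg (by linarith) hm2.le)) (mul_nonneg (by linarith : (0:ℝ) ≤ x - t) (by linarith : (0:ℝ) ≤ 1 - t - x))
  have hPm : (x ^ 2 - x ^ 4) * ((1 - δ ^ 2) * ((1 - t) * (1 - t / (1 - a))))
      ≤ x ^ 2 - u ^ 2 := by
    have e1 : (x ^ 2 - x ^ 4) * ((1 - δ ^ 2) * ((1 - t) * (1 - t / (1 - a))))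
        = ((x * (1 - δ ^ 2)) * ((1 - x) * (1 - t / (1 - a)))) * (x * ((1 + x) * (1 - t))) := by
      ring
    have e2 : x ^ 2 - u ^ 2 = ((x - t) * (1 - t - x)) * ((x + t) * (1 - t + x)) := by
      rw [hudef]; ring
    rw [e1, e2]; exact htot
  have hQ : 0 < x ^ 2 - x ^ 4 := by nlinarith [mul_pos (mul_pos hx0 hx0) (mul_pos (sub_pos.mpr hx1) (by linarith : (0:ℝ) < 1 + x))]
  have hQm : 0 < (x ^ 2 - x ^ 4) * ((1 - δ ^ 2) * ((1 - t) * (1 - t / (1 - a)))) := by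
    positivity
  -- chain
  have step1 : und t x ≤ (x ^ 2 * (1 + δ))
      / Real.sqrt ((x ^ 2 - x ^ 4) * ((1 - δ ^ 2) * ((1 - t) * (1 - t / (1 - a))))) := by
    unfold und
    rw [← hudef]
    gcongr
    all_goals first
      | exact Real.sqrt_pos.mpr hQm
      | exact Real.sqrt_le_sqrt hPm
      | positivity
      | nlinarith
  have step2 : (x ^ 2 * (1 + δ))
      / Real.sqrt ((x ^ 2 - x ^ 4) * ((1 - δ ^ 2) * ((1 - t) * (1 - t / (1 - a)))))
      = ((1 + δ) / Real.sqrt ((1 - δ ^ 2) * ((1 - t) * (1 - t / (1 - a)))))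
        * (x ^ 2 / Real.sqrt (x ^ 2 - x ^ 4)) := by
    rw [Real.sqrt_mul hQ.le, div_mul_div_comm]
    ring
  rw [f0_eq x hx0]
  exact step1.trans_eq step2

lemma f0_contOn (s : Set ℝ) (hs : ∀ x ∈ s, x ^ 2 < 1) :
    ContinuousOn (fun x : ℝ => x / Real.sqrt (1 - x ^ 2)) s := by
  apply ContinuousOn.div continuousOn_id
  · exact (Real.continuous_sqrt.comp (by continuity)).continuousOn
  · intro x hx
    exact ne_of_gt (Real.sqrt_pos.mpr (by linarith [hs x hx]))

lemma int_f0 (p q : ℝ) (hp : 0 ≤ p) (hpq : p ≤ q) (hq : q < 1) :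
    ∫ x in p..q, x / Real.sqrt (1 - x ^ 2)
      = Real.sqrt (1 - p ^ 2) - Real.sqrt (1 - q ^ 2) := by
  have hmem : ∀ x ∈ uIcc p q, 0 < 1 - x ^ 2 := by
    intro x hx
    rw [uIcc_of_le hpq] at hx
    nlinarith [hx.1, hx.2]
  have key : ∫ x in p..q, x / Real.sqrt (1 - x ^ 2)
      = (fun y => -Real.sqrt (1 - y ^ 2)) q - (fun y => -Real.sqrt (1 - y ^ 2)) p := by
    apply intervalIntegral.integral_eq_sub_of_hasDerivAt
    · intro x hx
      have h1 : 0 < 1 - x ^ 2 := hmem x hx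
      have hs : HasDerivAt (fun y : ℝ => 1 - y ^ 2) (-(2 * x)) x := by
        simpa using ((hasDerivAt_pow 2 x).const_sub 1)
      have h2 := (Real.hasDerivAt_sqrt (ne_of_gt h1)).comp x hs
      have h3 := h2.neg
      convert h3 using 1
      · ext y; simp
      have hsq : Real.sqrt (1 - x ^ 2) ≠ 0 := ne_of_gt (Real.sqrt_pos.mpr h1)
      field_simp
    · apply ContinuousOn.intervalIntegrable
      apply f0_contOn
      intro x hx
      linarith [hmem x hx]
  simp only at key
  rw [key]; ring

lemma int_rpow_shift (t d : ℝ) (htd : t ≤ d) :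
    ∫ x in t..d, (x - t) ^ (-(2:ℝ)⁻¹) = 2 * (d - t) ^ ((2:ℝ)⁻¹) := by
  rw [intervalIntegral.integral_comp_sub_right (fun y => y ^ (-(2:ℝ)⁻¹)) t, sub_self]
  rw [integral_rpow (Or.inl (by norm_num))]
  rw [Real.zero_rpow (by norm_num)]
  norm_num
  ring

lemma und_measurable (t : ℝ) : Measurable (und t) := by
  unfold und
  fun_prop

lemma cmaj_integrable (a t C : ℝ) :
    IntervalIntegrable (fun x => C * (x - t) ^ (-(2:ℝ)⁻¹)) volume t a := by
  have h0 : IntervalIntegrable (fun x : ℝ => x ^ (-(2:ℝ)⁻¹)) volume 0 (a - t) :=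
    intervalIntegrable_rpow' (by norm_num)
  have h1 := (h0.comp_sub_right t).const_mul C
  simpa using h1

lemma und_integrable (a t : ℝ) (ht0 : 0 < t) (hta : t ≤ (1 - a) / 2) (ha1 : a < 1)
    (hte : t ≤ a) : IntervalIntegrable (und t) volume t a := by
  have ht1 : t < 1 := by nlinarith
  rw [intervalIntegrable_iff_integrableOn_Ioc_of_le hte]
  have hg := (cmaj_integrable a t (2 / Real.sqrt ((1 - a) / 2))).1
  apply Integrable.mono' hg ((und_measurable t).aestronglyMeasurable.restrict)
  filter_upwards [ae_restrict_mem measurableSet_Ioc] with x hx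
  rw [Real.norm_of_nonneg (und_nonneg t x (by nlinarith [sq_nonneg x]))]
  exact coarse_ptwise a t x ht0 hta ha1 hx.1 hx.2
/-- For `0 < a < 1`, `∫_t^a ((x/(x²+t−t²))² − 1)^{−1/2} dx → 1 − √(1−a²)`
as `t → 0⁺`. -/
theorem undulary_integral_tendsto (a : ℝ) (ha0 : 0 < a) (ha1 : a < 1) :
    Tendsto (fun t => ∫ x in t..a, 1 / Real.sqrt ((x / (x ^ 2 + t - t ^ 2)) ^ 2 - 1))
      (nhdsWithin 0 (Set.Ioi 0)) (nhds (1 - Real.sqrt (1 - a ^ 2))) := by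
  have h1a : 0 < 1 - a := by linarith
  set C : ℝ := 2 / Real.sqrt ((1 - a) / 2) with hCdef
  set g : ℝ → ℝ := fun t => Real.sqrt (1 - t ^ 2) - Real.sqrt (1 - a ^ 2) with hgdef
  set h : ℝ → ℝ := fun t =>
    C * (2 * (t ^ ((3:ℝ)⁻¹) - t) ^ ((2:ℝ)⁻¹))
    + ((1 + t ^ ((3:ℝ)⁻¹)) /
        Real.sqrt ((1 - (t ^ ((3:ℝ)⁻¹)) ^ 2) * ((1 - t) * (1 - t / (1 - a)))))
      * (Real.sqrt (1 - (t ^ ((3:ℝ)⁻¹)) ^ 2) - Real.sqrt (1 - a ^ 2)) with hhdef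
  -- limits
  have hδlim : Tendsto (fun t : ℝ => t ^ ((3:ℝ)⁻¹)) (nhdsWithin 0 (Set.Ioi 0)) (nhds 0) := by
    have c := (Real.continuousAt_rpow_const 0 ((3:ℝ)⁻¹) (Or.inr (by norm_num))).tendsto
    simpa [Real.zero_rpow] using c.mono_left nhdsWithin_le_nhds
  have htid : Tendsto (fun t : ℝ => t) (nhdsWithin 0 (Set.Ioi 0)) (nhds 0) :=
    tendsto_id.mono_left nhdsWithin_le_nhds
  have hg : Tendsto g (nhdsWithin 0 (Set.Ioi 0)) (nhds (1 - Real.sqrt (1 - a ^ 2))) := by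
    rw [hgdef]
    have hsq : Tendsto (fun t : ℝ => Real.sqrt (1 - t ^ 2))
        (nhdsWithin 0 (Set.Ioi 0)) (nhds 1) := by
      have hinner : Tendsto (fun t : ℝ => 1 - t ^ 2) (nhdsWithin 0 (Set.Ioi 0)) (nhds 1) := by
        simpa using tendsto_const_nhds.sub (htid.pow 2)
      have := (Real.continuous_sqrt.tendsto (1:ℝ)).comp hinner
      simpa [Real.sqrt_one, Function.comp_def] using this
    simpa using hsq.sub tendsto_const_nhds
  have hh : Tendsto h (nhdsWithin 0 (Set.Ioi 0)) (nhds (1 - Real.sqrt (1 - a ^ 2))) := by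
    rw [hhdef]
    have hsub : Tendsto (fun t : ℝ => t ^ ((3:ℝ)⁻¹) - t) (nhdsWithin 0 (Set.Ioi 0))
        (nhds 0) := by simpa using hδlim.sub htid
    have hpow : Tendsto (fun t : ℝ => (t ^ ((3:ℝ)⁻¹) - t) ^ ((2:ℝ)⁻¹))
        (nhdsWithin 0 (Set.Ioi 0)) (nhds 0) := by
      have c := (Real.continuousAt_rpow_const 0 ((2:ℝ)⁻¹) (Or.inr (by norm_num))).tendsto
      simpa [Real.zero_rpow, Function.comp_def] using c.comp hsub
    have hδsq : Tendsto (fun t : ℝ => (t ^ ((3:ℝ)⁻¹)) ^ 2) (nhdsWithin 0 (Set.Ioi 0))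
        (nhds 0) := by simpa using hδlim.pow 2
    have hs1 : Tendsto (fun t : ℝ => Real.sqrt (1 - (t ^ ((3:ℝ)⁻¹)) ^ 2))
        (nhdsWithin 0 (Set.Ioi 0)) (nhds 1) := by
      have hinner : Tendsto (fun t : ℝ => 1 - (t ^ ((3:ℝ)⁻¹)) ^ 2) (nhdsWithin 0 (Set.Ioi 0))
          (nhds 1) := by simpa using tendsto_const_nhds.sub hδsq
      have := (Real.continuous_sqrt.tendsto (1:ℝ)).comp hinner
      simpa [Real.sqrt_one, Function.comp_def] using this
    have hminner : Tendsto (fun t : ℝ => (1 - (t ^ ((3:ℝ)⁻¹)) ^ 2) * ((1 - t) * (1 - t / (1 - a))))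
        (nhdsWithin 0 (Set.Ioi 0)) (nhds 1) := by
      have := ((tendsto_const_nhds (x := (1:ℝ))).sub hδsq).mul
        (((tendsto_const_nhds (x := (1:ℝ))).sub htid).mul
          ((tendsto_const_nhds (x := (1:ℝ))).sub (htid.div_const (1 - a))))
      simpa using this
    have hm : Tendsto (fun t : ℝ => Real.sqrt ((1 - (t ^ ((3:ℝ)⁻¹)) ^ 2) * ((1 - t) * (1 - t / (1 - a)))))
        (nhdsWithin 0 (Set.Ioi 0)) (nhds 1) := by
      have := (Real.continuous_sqrt.tendsto (1:ℝ)).comp hminner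
      simpa [Real.sqrt_one, Function.comp_def] using this
    have hK : Tendsto (fun t : ℝ => (1 + t ^ ((3:ℝ)⁻¹)) /
        Real.sqrt ((1 - (t ^ ((3:ℝ)⁻¹)) ^ 2) * ((1 - t) * (1 - t / (1 - a)))))
        (nhdsWithin 0 (Set.Ioi 0)) (nhds 1) := by
      have := ((tendsto_const_nhds (x := (1:ℝ))).add hδlim).div hm one_ne_zero
      simpa [Pi.div_def] using this
    have hterm1 := (tendsto_const_nhds (x := C)).mul ((tendsto_const_nhds (x := (2:ℝ))).mul hpow)
    have hterm2 := hK.mul (hs1.sub (tendsto_const_nhds (x := Real.sqrt (1 - a ^ 2))))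
    have := hterm1.add hterm2
    convert this using 2
    norm_num
  -- eventual bounds
  have ht₀ : 0 < min ((1 - a) / 2) (a ^ 3) := lt_min (by linarith) (by positivity)
  have hev : ∀ᶠ t in nhdsWithin 0 (Set.Ioi 0),
      g t ≤ (∫ x in t..a, 1 / Real.sqrt ((x / (x ^ 2 + t - t ^ 2)) ^ 2 - 1)) ∧
      (∫ x in t..a, 1 / Real.sqrt ((x / (x ^ 2 + t - t ^ 2)) ^ 2 - 1)) ≤ h t := by
    filter_upwards [Ioo_mem_nhdsGT_of_mem ⟨le_refl (0:ℝ), ht₀⟩] with t ht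
    obtain ⟨ht0, htt⟩ := ht
    have hta2 : t < (1 - a) / 2 := htt.trans_le (min_le_left _ _)
    have hta3 : t < a ^ 3 := htt.trans_le (min_le_right _ _)
    have hta : t ≤ (1 - a) / 2 := hta2.le
    have hte : t ≤ a := by
      nlinarith [mul_pos (mul_pos ha0 h1a) (by linarith : (0:ℝ) < 1 + a)]
    have ht1 : t < 1 := by linarith
    have hax : a < 1 - t := by linarith
    have hu : ∀ x : ℝ, 0 < x ^ 2 + t - t ^ 2 := fun x => by nlinarith [sq_nonneg x]
    have hIeq : (∫ x in t..a, 1 / Real.sqrt ((x / (x ^ 2 + t - t ^ 2)) ^ 2 - 1))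
        = ∫ x in t..a, und t x :=
      intervalIntegral.integral_congr (fun x _ => und_eq t x (hu x))
    have hδ0 : 0 < t ^ ((3:ℝ)⁻¹) := Real.rpow_pos_of_pos ht0 _
    have hδ3 : (t ^ ((3:ℝ)⁻¹)) ^ 3 = t := by
      rw [← Real.rpow_natCast (t ^ ((3:ℝ)⁻¹)) 3, ← Real.rpow_mul ht0.le]
      norm_num
    have hδt : t ≤ t ^ ((3:ℝ)⁻¹) := by
      nth_rewrite 1 [← Real.rpow_one t]
      exact Real.rpow_le_rpow_of_exponent_ge ht0 ht1.le (by norm_num)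
    have hδa : t ^ ((3:ℝ)⁻¹) ≤ a := by
      by_contra hcon
      push_neg at hcon
      have := pow_lt_pow_left₀ hcon ha0.le (by norm_num : 3 ≠ 0)
      rw [hδ3] at this
      linarith
    have hmem : t ^ ((3:ℝ)⁻¹) ∈ Set.uIcc t a := by
      rw [Set.uIcc_of_le hte]; exact ⟨hδt, hδa⟩
    have hund : IntervalIntegrable (und t) volume t a := und_integrable a t ht0 hta ha1 hte
    have hund1 : IntervalIntegrable (und t) volume t (t ^ ((3:ℝ)⁻¹)) :=
      hund.mono_set (Set.uIcc_subset_uIcc Set.left_mem_uIcc hmem)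
    have hund2 : IntervalIntegrable (und t) volume (t ^ ((3:ℝ)⁻¹)) a :=
      hund.mono_set (Set.uIcc_subset_uIcc hmem Set.right_mem_uIcc)
    have hf0int : IntervalIntegrable (fun x => x / Real.sqrt (1 - x ^ 2)) volume t a := by
      apply ContinuousOn.intervalIntegrable
      apply f0_contOn
      intro x hx
      rw [Set.uIcc_of_le hte] at hx
      nlinarith [hx.1, hx.2]
    constructor
    · simp only [hgdef]
      rw [hIeq, ← int_f0 t a ht0.le hte ha1]
      apply intervalIntegral.integral_mono_ae_restrict hte hf0int hund
      rw [← Measure.restrict_congr_set Ioc_ae_eq_Icc]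
      filter_upwards [ae_restrict_mem measurableSet_Ioc] with x hx
      exact lower_ptwise a t x ht0 hx.1 hx.2 hax
    · simp only [hhdef]
      rw [hIeq, ← intervalIntegral.integral_add_adjacent_intervals hund1 hund2]
      apply add_le_add
      · have hb : ∫ x in t..(t ^ ((3:ℝ)⁻¹)), und t x
            ≤ ∫ x in t..(t ^ ((3:ℝ)⁻¹)), C * (x - t) ^ (-(2:ℝ)⁻¹) := by
          apply intervalIntegral.integral_mono_ae_restrict hδt hund1
            (cmaj_integrable (t ^ ((3:ℝ)⁻¹)) t C)
          rw [← Measure.restrict_congr_set Ioc_ae_eq_Icc]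
          filter_upwards [ae_restrict_mem measurableSet_Ioc] with x hx
          exact coarse_ptwise a t x ht0 hta ha1 hx.1 (hx.2.trans hδa)
        refine hb.trans_eq ?_
        rw [intervalIntegral.integral_const_mul, int_rpow_shift t _ hδt]
      · have hKint : IntervalIntegrable (fun x =>
            ((1 + t ^ ((3:ℝ)⁻¹)) / Real.sqrt ((1 - (t ^ ((3:ℝ)⁻¹)) ^ 2) * ((1 - t) * (1 - t / (1 - a)))))
            * (x / Real.sqrt (1 - x ^ 2))) volume (t ^ ((3:ℝ)⁻¹)) a := by
          apply ContinuousOn.intervalIntegrable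
          apply ContinuousOn.mul continuousOn_const
          apply f0_contOn
          intro x hx
          rw [Set.uIcc_of_le hδa] at hx
          nlinarith [hx.1, hx.2]
        have hb : ∫ x in (t ^ ((3:ℝ)⁻¹))..a, und t x
            ≤ ∫ x in (t ^ ((3:ℝ)⁻¹))..a,
              ((1 + t ^ ((3:ℝ)⁻¹)) / Real.sqrt ((1 - (t ^ ((3:ℝ)⁻¹)) ^ 2) * ((1 - t) * (1 - t / (1 - a)))))
              * (x / Real.sqrt (1 - x ^ 2)) := by
          apply intervalIntegral.integral_mono_ae_restrict hδa hund2 hKint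
          rw [← Measure.restrict_congr_set Ioc_ae_eq_Icc]
          filter_upwards [ae_restrict_mem measurableSet_Ioc] with x hx
          exact fine_ptwise a t (t ^ ((3:ℝ)⁻¹)) x ht0 hδ0 hδ3 hta ha1 hx.1.le hx.2
        refine hb.trans_eq ?_
        rw [intervalIntegral.integral_const_mul, int_f0 _ a hδ0.le hδa ha1]
  exact tendsto_of_tendsto_of_tendsto_of_le_of_le' hg hh
    (hev.mono fun t ht => ht.1) (hev.mono fun t ht => ht.2)
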